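/- Let A be an m×n real matrix of rank r, let ℓ ≥ r, and let Ω be a random n×ℓ real matrix with independent standard Gaussian entries. Then almost surely (with probability 1 over the draw of Ω) the column space of AΩ equals the column space of A. -/

import Mathlib

open MeasureTheory ProbabilityTheory Matrix

instance {m n : Type*} : MeasurableSpace (Matrix m n ℝ) :=
  inferInstanceAs (MeasurableSpace (m → n → ℝ))

/-- The distribution of a random `n × ℓ` real matrix with independent standard
Gaussian entries: the product over all entries of the measure `N(0,1)` on `ℝ`. -/
noncomputable def gaussianMatrix (n ℓ : ℕ) : Measure (Matrix (Fin n) (Fin ℓ) ℝ) :=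
  Measure.pi fun _ : Fin n => Measure.pi fun _ : Fin ℓ => gaussianReal 0 1

/-- The column space of a matrix: the range of `x ↦ M x`. -/
noncomputable def colSpace {m n : Type*} [Fintype n] (A : Matrix m n ℝ) :
    Submodule ℝ (m → ℝ) :=
  LinearMap.range A.mulVecLin

open MvPolynomial in
lemma measurable_mveval {ι : Type*} (p : MvPolynomial ι ℝ) :
    Measurable fun x : ι → ℝ => MvPolynomial.eval x p := by
  induction p using MvPolynomial.induction_on with
  | C a => simpa using measurable_const
  | add p q hp hq => simp only [map_add]; exact hp.add hq
  | mul_X p i hp => simp only [map_mul, eval_X]; exact hp.mul (measurable_pi_apply i)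

noncomputable abbrev gpi (ι : Type*) [Fintype ι] : Measure (ι → ℝ) :=
  Measure.pi fun _ : ι => gaussianReal 0 1

lemma gaussianReal_finite_null {s : Set ℝ} (hs : s.Finite) : gaussianReal 0 1 s = 0 := by
  have h1 : (volume : Measure ℝ) s = 0 := hs.measure_zero _
  exact gaussianReal_absolutelyContinuous 0 (by norm_num) h1

open MvPolynomial in
lemma gauss_poly_null_fin : ∀ (k : ℕ) (ι : Type) [Fintype ι], Fintype.card ι = k →
    ∀ p : MvPolynomial ι ℝ, p ≠ 0 → gpi ι {x | MvPolynomial.eval x p = 0} = 0 := by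
  intro k
  induction k with
  | zero =>
    intro ι _ hcard p hp
    have : IsEmpty ι := Fintype.card_eq_zero_iff.mp hcard
    obtain ⟨a, rfl⟩ := MvPolynomial.C_surjective ι p
    have ha : a ≠ 0 := fun h => hp (by simp [h])
    have h0 : {x : ι → ℝ | MvPolynomial.eval x (C a) = 0} = ∅ := by
      ext x; simp [ha]
    rw [h0]; simp
  | succ k ih =>
    intro ι _ hcard p hp
    -- transport to Fin (k+1)
    have e : ι ≃ Fin (k + 1) := Fintype.equivFinOfCardEq hcard
    set q : MvPolynomial (Fin (k + 1)) ℝ := MvPolynomial.rename e p with hq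
    have hq0 : q ≠ 0 := fun h => hp ((MvPolynomial.rename_injective e e.injective).eq_iff.mp (by simpa using h))
    have hmp := MeasureTheory.measurePreserving_piCongrLeft (fun _ : Fin (k+1) => gaussianReal 0 1) e
    set E := MeasurableEquiv.piCongrLeft (fun _ : Fin (k+1) => ℝ) e with hE
    have hSmeas : MeasurableSet {y : Fin (k+1) → ℝ | MvPolynomial.eval y q = 0} :=
      (measurable_mveval q) (measurableSet_singleton 0)
    have hpre : E ⁻¹' {y | MvPolynomial.eval y q = 0} = {x : ι → ℝ | MvPolynomial.eval x p = 0} := by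
      ext x
      have hEx : ∀ b, E x b = x (e.symm b) := by
        intro b
        conv_lhs => rw [show b = e (e.symm b) by simp]
        exact MeasurableEquiv.piCongrLeft_apply_apply (β := fun _ : Fin (k+1) => ℝ) e x (e.symm b)
      simp only [Set.mem_preimage, Set.mem_setOf_eq, hq, MvPolynomial.eval_rename]
      have : (E x) ∘ e = x := by funext i; simp [hEx]
      rw [this]
    have key : gpi (Fin (k+1)) {y | MvPolynomial.eval y q = 0} = 0 := by
      -- peel off coordinate 0
      have hfs := MeasureTheory.measurePreserving_piFinSuccAbove (fun _ : Fin (k+1) => gaussianReal 0 1) 0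
      set F := MeasurableEquiv.piFinSuccAbove (fun _ : Fin (k+1) => ℝ) 0 with hF
      set T : Set (ℝ × (Fin k → ℝ)) := {az | MvPolynomial.eval (Fin.cons az.1 az.2) q = 0} with hT
      have hTmeas : MeasurableSet T := by
        have : Measurable fun az : ℝ × (Fin k → ℝ) => (Fin.cons az.1 az.2 : Fin (k+1) → ℝ) := by
          apply measurable_pi_lambda
          intro i
          refine Fin.cases ?_ ?_ i
          · exact measurable_fst
          · intro j; exact (measurable_pi_apply j).comp measurable_snd
        exact ((measurable_mveval q).comp this) (measurableSet_singleton 0)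
      have hpre2 : F ⁻¹' T = {y | MvPolynomial.eval y q = 0} := by
        ext y
        have : F y = (y 0, fun j => y ((0 : Fin (k+1)).succAbove j)) := rfl
        simp only [Set.mem_preimage, this, hT, Set.mem_setOf_eq]
        have : (Fin.cons (y 0) (fun j => y ((0 : Fin (k+1)).succAbove j)) : Fin (k+1) → ℝ) = y := by
          funext i
          refine Fin.cases ?_ ?_ i
          · simp
          · intro j; simp [Fin.succAbove_zero]
        rw [this]
      rw [← hpre2, hfs.measure_preimage hTmeas.nullMeasurableSet]
      set Q := MvPolynomial.finSuccEquiv ℝ k q with hQ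
      have hQ0 : Q ≠ 0 := by
        intro h
        apply hq0
        have := congrArg (MvPolynomial.finSuccEquiv ℝ k).symm h
        rwa [AlgEquiv.symm_apply_apply, map_zero] at this
      set c := Q.leadingCoeff with hc
      have hc0 : c ≠ 0 := Polynomial.leadingCoeff_ne_zero.mpr hQ0
      set U : Set ((Fin k → ℝ) × ℝ) := {za | MvPolynomial.eval (Fin.cons za.2 za.1) q = 0} with hU
      have hUmeas : MeasurableSet U := by
        have : Measurable fun za : (Fin k → ℝ) × ℝ => (Fin.cons za.2 za.1 : Fin (k+1) → ℝ) := by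
          apply measurable_pi_lambda
          intro i
          refine Fin.cases ?_ ?_ i
          · exact measurable_snd
          · intro j; exact (measurable_pi_apply j).comp measurable_fst
        exact ((measurable_mveval q).comp this) (measurableSet_singleton 0)
      have hswap : T = Prod.swap ⁻¹' U := by
        ext az; simp [hT, hU]
      rw [hswap, Measure.measurePreserving_swap.measure_preimage hUmeas.nullMeasurableSet,
        Measure.measure_prod_null hUmeas]
      have hnull : (gpi (Fin k)) {z | MvPolynomial.eval z c = 0} = 0 :=
        ih (Fin k) (by simp) c hc0
      have hae : ∀ᵐ z ∂(gpi (Fin k)), MvPolynomial.eval z c ≠ 0 := by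
        rw [MeasureTheory.ae_iff]
        simpa using hnull
      filter_upwards [hae] with z hz
      have hmap0 : (Q.map (MvPolynomial.eval z)) ≠ 0 := by
        intro h
        apply hz
        have := congrArg (fun P => Polynomial.coeff P Q.natDegree) h
        simp only [Polynomial.coeff_map, Polynomial.coeff_zero] at this
        exact this
      have hset : Prod.mk z ⁻¹' U = {a : ℝ | (Q.map (MvPolynomial.eval z)).eval a = 0} := by
        ext a
        simp only [Set.mem_preimage, hU, Set.mem_setOf_eq]
        rw [MvPolynomial.eval_eq_eval_mv_eval']
      have : (Prod.mk z ⁻¹' U).Finite := by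
        rw [hset]
        exact Polynomial.finite_setOf_isRoot hmap0
      exact gaussianReal_finite_null this
    rw [← hpre, hmp.measure_preimage hSmeas.nullMeasurableSet, key]

def rowSumEquiv (n ℓ : ℕ) : (Fin ℓ ⊕ Fin n × Fin ℓ) ≃ (Fin (n+1) × Fin ℓ) where
  toFun := Sum.elim (fun j => (0, j)) (fun p => (p.1.succ, p.2))
  invFun := fun p => Fin.cases (Sum.inl p.2) (fun i => Sum.inr (i, p.2)) p.1
  left_inv := by rintro (j | ⟨i, j⟩) <;> simp
  right_inv := by
    rintro ⟨i, j⟩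
    refine Fin.cases ?_ ?_ i <;> simp

lemma measurePreserving_matrixCurry (n ℓ : ℕ) :
    MeasurePreserving (fun x : Fin n × Fin ℓ → ℝ => (fun i j => x (i, j) : Matrix (Fin n) (Fin ℓ) ℝ))
      (gpi (Fin n × Fin ℓ)) (gaussianMatrix n ℓ) := by
  induction n with
  | zero =>
    have hmeas : Measurable (fun x : Fin 0 × Fin ℓ → ℝ =>
        (fun i j => x (i, j) : Matrix (Fin 0) (Fin ℓ) ℝ)) := by
      apply measurable_pi_lambda; intro i; exact i.elim0
    refine ⟨hmeas, ?_⟩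
    have h1 : IsProbabilityMeasure ((gpi (Fin 0 × Fin ℓ)).map
        (fun x : Fin 0 × Fin ℓ → ℝ => (fun i j => x (i, j) : Matrix (Fin 0) (Fin ℓ) ℝ))) :=
      Measure.isProbabilityMeasure_map hmeas.aemeasurable
    have h2 : IsProbabilityMeasure (gaussianMatrix 0 ℓ) :=
      inferInstanceAs (IsProbabilityMeasure (Measure.pi fun _ : Fin 0 => Measure.pi fun _ : Fin ℓ => gaussianReal 0 1))
    refine Measure.ext fun (s : Set (Matrix (Fin 0) (Fin ℓ) ℝ)) hs => ?_
    rcases s.eq_empty_or_nonempty with rfl | hne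
    · exact (measure_empty (μ := (gpi (Fin 0 × Fin ℓ)).map (fun x : Fin 0 × Fin ℓ → ℝ =>
        (fun i j => x (i, j) : Matrix (Fin 0) (Fin ℓ) ℝ)))).trans
        (measure_empty (μ := gaussianMatrix 0 ℓ)).symm
    · have hsu : s = Set.univ := by
        apply Set.eq_univ_of_forall
        intro x
        obtain ⟨y, hy⟩ := hne
        rwa [Subsingleton.elim x y]
      subst hsu; exact h1.measure_univ.trans h2.measure_univ.symm
  | succ n ihn =>
    set E := rowSumEquiv n ℓ with hE
    set ME := MeasurableEquiv.piCongrLeft (fun _ : Fin (n+1) × Fin ℓ => ℝ) E with hME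
    have hA : MeasurePreserving ME.symm (gpi (Fin (n+1) × Fin ℓ)) (gpi (Fin ℓ ⊕ Fin n × Fin ℓ)) :=
      MeasurePreserving.symm ME
        (MeasureTheory.measurePreserving_piCongrLeft (fun _ : Fin (n+1) × Fin ℓ => gaussianReal 0 1) E)
    have hB : MeasurePreserving (MeasurableEquiv.sumPiEquivProdPi (fun _ : Fin ℓ ⊕ Fin n × Fin ℓ => ℝ))
        (gpi (Fin ℓ ⊕ Fin n × Fin ℓ)) ((gpi (Fin ℓ)).prod (gpi (Fin n × Fin ℓ))) :=
      MeasureTheory.measurePreserving_sumPiEquivProdPi (fun _ => gaussianReal 0 1)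
    haveI : SFinite (gaussianMatrix n ℓ) :=
      inferInstanceAs (SFinite (Measure.pi fun _ : Fin n => Measure.pi fun _ : Fin ℓ => gaussianReal 0 1))
    have hC : MeasurePreserving
        (Prod.map (id : (Fin ℓ → ℝ) → (Fin ℓ → ℝ))
          (fun x : Fin n × Fin ℓ → ℝ => (fun i j => x (i, j) : Matrix (Fin n) (Fin ℓ) ℝ)))
        ((gpi (Fin ℓ)).prod (gpi (Fin n × Fin ℓ))) ((gpi (Fin ℓ)).prod (gaussianMatrix n ℓ)) :=
      (MeasurePreserving.id _).prod ihn
    have hD : MeasurePreserving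
        (MeasurableEquiv.piFinSuccAbove (fun _ : Fin (n+1) => (Fin ℓ → ℝ)) 0).symm
        ((Measure.pi fun _ : Fin ℓ => gaussianReal 0 1).prod
          (Measure.pi fun _ : Fin n => Measure.pi fun _ : Fin ℓ => gaussianReal 0 1))
        (Measure.pi fun _ : Fin (n+1) => Measure.pi fun _ : Fin ℓ => gaussianReal 0 1) :=
      MeasurePreserving.symm _
        (MeasureTheory.measurePreserving_piFinSuccAbove
          (fun _ : Fin (n+1) => Measure.pi fun _ : Fin ℓ => gaussianReal 0 1) 0)
    have hcomp := hD.comp (hC.comp (hB.comp hA))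
    have hfun : (fun x : Fin (n+1) × Fin ℓ → ℝ =>
        (fun i j => x (i, j) : Matrix (Fin (n+1)) (Fin ℓ) ℝ)) =
        ((MeasurableEquiv.piFinSuccAbove (fun _ : Fin (n+1) => (Fin ℓ → ℝ)) 0).symm
          ∘ (Prod.map (id : (Fin ℓ → ℝ) → (Fin ℓ → ℝ))
              (fun x : Fin n × Fin ℓ → ℝ => (fun i j => x (i, j) : Matrix (Fin n) (Fin ℓ) ℝ)))
          ∘ (MeasurableEquiv.sumPiEquivProdPi (fun _ : Fin ℓ ⊕ Fin n × Fin ℓ => ℝ))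
          ∘ ME.symm) := by
      funext x
      funext i j
      simp only [Function.comp_apply, MeasurableEquiv.piFinSuccAbove_symm_apply,
        Fin.insertNthEquiv, Equiv.coe_fn_mk, Prod.map_apply, id_eq,
        MeasurableEquiv.coe_sumPiEquivProdPi, Equiv.sumPiEquivProdPi_apply]
      have hMEsymm : ∀ (y : Fin (n+1) × Fin ℓ → ℝ) (s : Fin ℓ ⊕ Fin n × Fin ℓ),
          ME.symm y s = y (E s) := by
        intro y s
        rw [hME]
        rfl
      refine Fin.cases ?_ ?_ i
      · rw [Fin.insertNth_apply_same]
        rw [hMEsymm]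
        rfl
      · intro i'
        rw [show (i'.succ : Fin (n+1)) = (0 : Fin (n+1)).succAbove i' by simp [Fin.succAbove_zero],
          Fin.insertNth_apply_succAbove]
        rw [hMEsymm]
        rfl
    rw [hfun]
    exact hcomp

lemma good_B {m n r ℓ : ℕ} (A : Matrix (Fin m) (Fin n) ℝ)
    (hr : A.rank = r) (hℓ : r ≤ ℓ) :
    ∃ B : Matrix (Fin r) (Fin n) ℝ,
      (∀ Ω : Matrix (Fin n) (Fin ℓ) ℝ,
        ((B * Ω) * (B * Ω)ᵀ).det ≠ 0 → colSpace (A * Ω) = colSpace A) ∧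
      (∃ Ω₀ : Matrix (Fin n) (Fin ℓ) ℝ, ((B * Ω₀) * (B * Ω₀)ᵀ).det ≠ 0) := by
  classical
  have hfr : Module.finrank ℝ (colSpace A) = r := hr
  obtain ⟨q, hq⟩ := Submodule.exists_isCompl (colSpace A)
  set π := (colSpace A).linearProjOfIsCompl q hq with hπ
  set φ := (Module.finBasisOfFinrankEq ℝ (colSpace A) hfr).equivFun with hφ
  set L : (Fin m → ℝ) →ₗ[ℝ] (Fin r → ℝ) := (φ : colSpace A →ₗ[ℝ] (Fin r → ℝ)).comp π with hL0
  have hLval : ∀ x : colSpace A, L ↑x = φ x := by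
    intro x
    simp [hL0, hπ, Submodule.linearProjOfIsCompl_apply_left]
    exact Submodule.projectionOnto_apply_left hq x
  set B : Matrix (Fin r) (Fin n) ℝ := LinearMap.toMatrix' (L ∘ₗ A.mulVecLin) with hB
  have hBlin : B.mulVecLin = L ∘ₗ A.mulVecLin := by
    rw [hB, ← Matrix.toLin'_apply', Matrix.toLin'_toMatrix']
  refine ⟨B, ?_, ?_⟩
  · intro Ω hdet
    -- Gram matrix invertible → B*Ω has rank r
    have hunit : IsUnit ((B * Ω) * (B * Ω)ᵀ) :=
      (Matrix.isUnit_iff_isUnit_det _).mpr hdet.isUnit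
    have hrankG : ((B * Ω) * (B * Ω)ᵀ).rank = r := by
      rw [Matrix.rank_of_isUnit _ hunit, Fintype.card_fin]
    have hrankBΩ : (B * Ω).rank = r := by
      refine le_antisymm ?_ ?_
      · simpa using Matrix.rank_le_card_height (B * Ω)
      · calc r = ((B * Ω) * (B * Ω)ᵀ).rank := hrankG.symm
          _ ≤ (B * Ω).rank := Matrix.rank_mul_le_left _ _
    -- rank (A * Ω) = r
    have hcomp : (B * Ω).mulVecLin = L ∘ₗ (A * Ω).mulVecLin := by
      rw [Matrix.mulVecLin_mul, hBlin, Matrix.mulVecLin_mul, LinearMap.comp_assoc]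
    have hrankAΩ : (A * Ω).rank = r := by
      refine le_antisymm ?_ ?_
      · rw [← hr]; exact Matrix.rank_mul_le_left _ _
      · have h1 : (B * Ω).rank ≤ (A * Ω).rank := by
          rw [Matrix.rank, hcomp, LinearMap.range_comp]
          exact Submodule.finrank_map_le _ _
        rw [← hrankBΩ]; exact h1
    -- conclude
    have hle : colSpace (A * Ω) ≤ colSpace A := by
      rw [colSpace, colSpace, Matrix.mulVecLin_mul]
      exact LinearMap.range_comp_le_range _ _
    exact Submodule.eq_of_le_of_finrank_eq hle (by rw [show Module.finrank ℝ (colSpace (A*Ω)) = (A*Ω).rank from rfl, hrankAΩ, hfr])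
  · -- existence of Ω₀
    have hsurj : LinearMap.range B.mulVecLin = ⊤ := by
      rw [hBlin, LinearMap.range_comp]
      rw [Submodule.eq_top_iff']
      intro y
      refine ⟨↑(φ.symm y), ?_, ?_⟩
      · exact (φ.symm y).2
      · rw [hLval (φ.symm y)]; simp
    obtain ⟨g, hg⟩ := (B.mulVecLin).exists_rightInverse_of_surjective hsurj
    set S : Matrix (Fin n) (Fin r) ℝ := LinearMap.toMatrix' g with hS
    have hBS : B * S = 1 := by
      have : B.mulVecLin ∘ₗ g = LinearMap.id := hg
      calc B * S = LinearMap.toMatrix' B.mulVecLin * LinearMap.toMatrix' g := by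
            rw [← hS]
            congr 1
            rw [← Matrix.toLin'_apply']
            simp
          _ = LinearMap.toMatrix' (B.mulVecLin ∘ₗ g) := (LinearMap.toMatrix'_comp _ _).symm
          _ = 1 := by rw [this, LinearMap.toMatrix'_id]
    set E : Matrix (Fin r) (Fin ℓ) ℝ := Matrix.of (fun i j => if (i : ℕ) = (j : ℕ) then 1 else 0) with hE
    have hEE : E * Eᵀ = (1 : Matrix (Fin r) (Fin r) ℝ) := by
      ext i i'
      simp only [Matrix.mul_apply, Matrix.transpose_apply, hE, Matrix.of_apply, Matrix.one_apply]
      rw [Finset.sum_eq_single (⟨(i : ℕ), lt_of_lt_of_le i.2 hℓ⟩ : Fin ℓ)]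
      · by_cases h : i = i'
        · subst h; simp
        · have : ¬ ((i' : ℕ) = (i : ℕ)) := fun hc => h (Fin.ext hc.symm)
          simp [this, h]
      · intro j _ hj
        have : ¬ ((i : ℕ) = (j : ℕ)) := by
          intro hc
          apply hj
          exact Fin.ext hc.symm
        simp [this]
      · intro h
        exact absurd (Finset.mem_univ _) h
    refine ⟨S * E, ?_⟩
    have hBSE : B * (S * E) = E := by rw [← Matrix.mul_assoc, hBS, Matrix.one_mul]
    rw [hBSE, hEE]
    simp

noncomputable def gramPoly {r n : ℕ} (ℓ : ℕ) (B : Matrix (Fin r) (Fin n) ℝ) :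
    MvPolynomial (Fin n × Fin ℓ) ℝ :=
  (((B.map MvPolynomial.C : Matrix (Fin r) (Fin n) (MvPolynomial (Fin n × Fin ℓ) ℝ)) *
      (Matrix.of (fun i j => MvPolynomial.X (i, j)) :
        Matrix (Fin n) (Fin ℓ) (MvPolynomial (Fin n × Fin ℓ) ℝ)) : Matrix (Fin r) (Fin ℓ) (MvPolynomial (Fin n × Fin ℓ) ℝ)) *
    ((B.map MvPolynomial.C : Matrix (Fin r) (Fin n) (MvPolynomial (Fin n × Fin ℓ) ℝ)) *
      (Matrix.of (fun i j => MvPolynomial.X (i, j)) :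
        Matrix (Fin n) (Fin ℓ) (MvPolynomial (Fin n × Fin ℓ) ℝ)) : Matrix (Fin r) (Fin ℓ) (MvPolynomial (Fin n × Fin ℓ) ℝ))ᵀ :
      Matrix (Fin r) (Fin r) (MvPolynomial (Fin n × Fin ℓ) ℝ)).det

lemma eval_gramPoly {r n ℓ : ℕ} (B : Matrix (Fin r) (Fin n) ℝ) (x : Fin n × Fin ℓ → ℝ) :
    MvPolynomial.eval x (gramPoly ℓ B) =
      ((B * (Matrix.of fun i j => x (i, j))) * (B * (Matrix.of fun i j => x (i, j)))ᵀ).det := by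
  classical
  have hP : ((B.map MvPolynomial.C : Matrix (Fin r) (Fin n) (MvPolynomial (Fin n × Fin ℓ) ℝ)) *
      (Matrix.of (fun i j => MvPolynomial.X (i, j)) :
        Matrix (Fin n) (Fin ℓ) (MvPolynomial (Fin n × Fin ℓ) ℝ)) : Matrix (Fin r) (Fin ℓ) (MvPolynomial (Fin n × Fin ℓ) ℝ)).map (MvPolynomial.eval x)
      = B * (Matrix.of fun i j => x (i, j)) := by
    rw [Matrix.map_mul]
    congr 1
    · rw [Matrix.map_map]
      ext i j
      simp
    · ext i j
      simp
  rw [gramPoly, RingHom.map_det, RingHom.mapMatrix_apply, Matrix.map_mul,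
    Matrix.transpose_map, hP]

/-- If `A` is an `m × n` real matrix of rank `r` and `Ω` is a random `n × ℓ`
standard Gaussian matrix with `ℓ ≥ r`, then almost surely the column space of
`A * Ω` equals the column space of `A`. -/
theorem colSpace_mul_gaussian_eq_colSpace
    {m n r ℓ : ℕ} (A : Matrix (Fin m) (Fin n) ℝ)
    (hr : A.rank = r) (hℓ : r ≤ ℓ) :
    gaussianMatrix n ℓ {Ω | colSpace (A * Ω) = colSpace A} = 1 := by
  classical
  obtain ⟨B, hB1, Ω₀, hΩ₀⟩ := good_B A hr hℓ
  set p := gramPoly ℓ B with hp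
  have hofeq : ∀ Ω : Matrix (Fin n) (Fin ℓ) ℝ,
      (Matrix.of fun i j => (fun ij : Fin n × Fin ℓ => Ω ij.1 ij.2) (i, j)) = Ω := fun _ => rfl
  have hevalΩ : ∀ Ω : Matrix (Fin n) (Fin ℓ) ℝ,
      MvPolynomial.eval (fun ij : Fin n × Fin ℓ => Ω ij.1 ij.2) p
        = ((B * Ω) * (B * Ω)ᵀ).det := by
    intro Ω
    rw [hp, eval_gramPoly, hofeq]
  have hp0 : p ≠ 0 := by
    intro h
    apply hΩ₀
    have := hevalΩ Ω₀
    rw [h] at this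
    simpa using this.symm
  have hmunc : Measurable fun Ω : Matrix (Fin n) (Fin ℓ) ℝ => (fun ij : Fin n × Fin ℓ => Ω ij.1 ij.2) := by
    apply measurable_pi_lambda
    intro ij
    exact (measurable_pi_apply ij.2).comp (measurable_pi_apply ij.1)
  set N : Set (Matrix (Fin n) (Fin ℓ) ℝ) :=
    {Ω | MvPolynomial.eval (fun ij : Fin n × Fin ℓ => Ω ij.1 ij.2) p = 0} with hN
  have hNmeas : MeasurableSet N :=
    ((measurable_mveval p).comp hmunc) (measurableSet_singleton 0)
  have hNnull : gaussianMatrix n ℓ N = 0 := by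
    have hmp := measurePreserving_matrixCurry n ℓ
    have hpre : (fun x : Fin n × Fin ℓ → ℝ => (fun i j => x (i, j) : Matrix (Fin n) (Fin ℓ) ℝ)) ⁻¹' N
        = {x | MvPolynomial.eval x p = 0} := by
      ext x
      exact Iff.rfl
    have h1 : gaussianMatrix n ℓ N = gpi (Fin n × Fin ℓ) {x | MvPolynomial.eval x p = 0} := by
      rw [← hpre]
      exact (hmp.measure_preimage hNmeas.nullMeasurableSet).symm
    exact h1.trans (gauss_poly_null_fin (Fintype.card (Fin n × Fin ℓ)) (Fin n × Fin ℓ) rfl p hp0)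
  haveI hprob : IsProbabilityMeasure (gaussianMatrix n ℓ) :=
    inferInstanceAs (IsProbabilityMeasure
      (Measure.pi fun _ : Fin n => Measure.pi fun _ : Fin ℓ => gaussianReal 0 1))
  have hsub : Nᶜ ⊆ {Ω | colSpace (A * Ω) = colSpace A} := by
    intro Ω hΩ
    apply hB1
    intro h0
    exact hΩ (by rw [hN, Set.mem_setOf_eq, hevalΩ]; exact h0)
  have hcompl : gaussianMatrix n ℓ Nᶜ = 1 := by
    rw [measure_compl hNmeas (by simp [hNnull]), hNnull, measure_univ]
    simp
  refine le_antisymm prob_le_one ?_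
  calc (1 : ENNReal) = gaussianMatrix n ℓ Nᶜ := hcompl.symm
    _ ≤ _ := measure_mono hsub
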